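/- For c > 0 let f(t) = 2·arsinh(c·sinh(t/2)) and g(t) = c·t for t > 0. If 0 < c < 1, then the function t ↦ f(t)/g(t) is strictly increasing on (0,∞) and c·t ≤ 2·arsinh(c·sinh(t/2)) ≤ t for all t ≥ 0. If c > 1, then t ↦ f(t)/g(t) is strictly decreasing on (0,∞) and t ≤ 2·arsinh(c·sinh(t/2)) ≤ c·t for all t ≥ 0. -/

import Mathlib

open Real Set

private lemma aux_hasDerivAt_F (c : ℝ) (s : ℝ) :
    HasDerivAt (fun s => Real.arsinh (c * Real.sinh s))
      ((Real.sqrt (1 + (c * Real.sinh s) ^ 2))⁻¹ * (c * Real.cosh s)) s :=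
  (Real.hasDerivAt_arsinh _).comp s ((Real.hasDerivAt_sinh s).const_mul c)

private lemma aux_w_pos (c s : ℝ) : (0:ℝ) < 1 + (c * Real.sinh s) ^ 2 := by positivity

private lemma aux_deriv2 (c : ℝ) (s : ℝ) :
    deriv (deriv (fun s => Real.arsinh (c * Real.sinh s))) s =
      c * (1 - c ^ 2) * Real.sinh s /
        ((1 + (c * Real.sinh s) ^ 2) * Real.sqrt (1 + (c * Real.sinh s) ^ 2)) := by
  have hd1 : deriv (fun s => Real.arsinh (c * Real.sinh s)) =
      fun s => (Real.sqrt (1 + (c * Real.sinh s) ^ 2))⁻¹ * (c * Real.cosh s) :=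
    funext fun s => (aux_hasDerivAt_F c s).deriv
  rw [hd1]
  have hw : HasDerivAt (fun s => 1 + (c * Real.sinh s) ^ 2)
      (2 * (c * Real.sinh s) * (c * Real.cosh s)) s := by
    have := (((Real.hasDerivAt_sinh s).const_mul c).pow 2).const_add 1
    simpa [mul_comm, mul_assoc, mul_left_comm] using this
  have hwne : (1 + (c * Real.sinh s) ^ 2) ≠ 0 := (aux_w_pos c s).ne'
  have hvpos : 0 < Real.sqrt (1 + (c * Real.sinh s) ^ 2) := Real.sqrt_pos.2 (aux_w_pos c s)
  have hsq : HasDerivAt (fun s => Real.sqrt (1 + (c * Real.sinh s) ^ 2))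
      (2 * (c * Real.sinh s) * (c * Real.cosh s) /
        (2 * Real.sqrt (1 + (c * Real.sinh s) ^ 2))) s := hw.sqrt hwne
  have hinv := hsq.inv hvpos.ne'
  have hG := hinv.mul ((Real.hasDerivAt_cosh s).const_mul c)
  rw [show (fun s => (Real.sqrt (1 + (c * Real.sinh s) ^ 2))⁻¹ * (c * Real.cosh s)) =
      ((fun s => Real.sqrt (1 + (c * Real.sinh s) ^ 2))⁻¹ * fun y => c * Real.cosh y) from rfl,
    hG.deriv, Pi.inv_apply]
  have hv2 : Real.sqrt (1 + (c * Real.sinh s) ^ 2) ^ 2 = 1 + (c * Real.sinh s) ^ 2 :=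
    Real.sq_sqrt (aux_w_pos c s).le
  have hch : Real.cosh s ^ 2 = Real.sinh s ^ 2 + 1 := Real.cosh_sq s
  set v := Real.sqrt (1 + (c * Real.sinh s) ^ 2) with hv
  rw [show (1 + (c * Real.sinh s) ^ 2) = v ^ 2 from hv2.symm]
  field_simp
  linear_combination (-c^3 * Real.sinh s) * hch + (c * Real.sinh s) * hv2

private lemma aux_contOn (c : ℝ) :
    ContinuousOn (fun s => Real.arsinh (c * Real.sinh s)) (Set.Ici 0) :=
  (Real.continuous_arsinh.comp (continuous_const.mul Real.continuous_sinh)).continuousOn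

private lemma aux_convex (c : ℝ) (hc : 0 < c) (hc1 : c < 1) :
    StrictConvexOn ℝ (Set.Ici 0) (fun s => Real.arsinh (c * Real.sinh s)) := by
  apply strictConvexOn_of_deriv2_pos (convex_Ici 0) (aux_contOn c)
  intro x hx
  rw [interior_Ici, mem_Ioi] at hx
  rw [show deriv^[2] (fun s => Real.arsinh (c * Real.sinh s)) = deriv (deriv
      (fun s => Real.arsinh (c * Real.sinh s))) from rfl, aux_deriv2]
  apply div_pos
  · have h1 : 0 < Real.sinh x := Real.sinh_pos_iff.2 hx
    have h2 : (0:ℝ) < 1 - c ^ 2 := by nlinarith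
    exact mul_pos (mul_pos hc h2) h1
  · positivity

private lemma aux_concave (c : ℝ) (hc1 : 1 < c) :
    StrictConcaveOn ℝ (Set.Ici 0) (fun s => Real.arsinh (c * Real.sinh s)) := by
  apply strictConcaveOn_of_deriv2_neg (convex_Ici 0) (aux_contOn c)
  intro x hx
  rw [interior_Ici, mem_Ioi] at hx
  rw [show deriv^[2] (fun s => Real.arsinh (c * Real.sinh s)) = deriv (deriv
      (fun s => Real.arsinh (c * Real.sinh s))) from rfl, aux_deriv2]
  apply div_neg_of_neg_of_pos
  · have h1 : 0 < Real.sinh x := Real.sinh_pos_iff.2 hx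
    have h2 : (0:ℝ) < c := lt_trans one_pos hc1
    have h3 : 1 - c ^ 2 < 0 := by nlinarith
    exact mul_neg_of_neg_of_pos (mul_neg_of_pos_of_neg h2 h3) h1
  · positivity

private lemma aux_sinh_convex : ConvexOn ℝ (Set.Ici 0) Real.sinh := by
  apply convexOn_of_deriv2_nonneg (convex_Ici 0) Real.continuous_sinh.continuousOn
  · exact Real.differentiable_sinh.differentiableOn
  · rw [Real.deriv_sinh]; exact Real.differentiable_cosh.differentiableOn
  · intro x hx
    rw [interior_Ici, mem_Ioi] at hx
    rw [show deriv^[2] Real.sinh = deriv (deriv Real.sinh) from rfl,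
      Real.deriv_sinh, Real.deriv_cosh]
    exact (Real.sinh_pos_iff.2 hx).le

private lemma aux_sinh_mul (c s : ℝ) (hc0 : 0 ≤ c) (hc1 : c ≤ 1) (hs : 0 ≤ s) :
    Real.sinh (c * s) ≤ c * Real.sinh s := by
  have := aux_sinh_convex.2 (mem_Ici.mpr hs) (mem_Ici.mpr (le_refl 0)) hc0
    (by linarith : (0:ℝ) ≤ 1 - c) (by ring)
  simpa [smul_eq_mul] using this

theorem stmt_5 (c : ℝ) (hc : 0 < c) :
    ((c < 1 →
      StrictMonoOn (fun t : ℝ => (2 * Real.arsinh (c * Real.sinh (t / 2))) / (c * t))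
        (Set.Ioi (0 : ℝ)) ∧
      ∀ t : ℝ, 0 ≤ t →
        c * t ≤ 2 * Real.arsinh (c * Real.sinh (t / 2)) ∧
          2 * Real.arsinh (c * Real.sinh (t / 2)) ≤ t) ∧
    (1 < c →
      StrictAntiOn (fun t : ℝ => (2 * Real.arsinh (c * Real.sinh (t / 2))) / (c * t))
        (Set.Ioi (0 : ℝ)) ∧
      ∀ t : ℝ, 0 ≤ t →
        t ≤ 2 * Real.arsinh (c * Real.sinh (t / 2)) ∧
          2 * Real.arsinh (c * Real.sinh (t / 2)) ≤ c * t)) := by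
  constructor
  · intro hc1
    constructor
    · intro a ha b hb hab
      rw [mem_Ioi] at ha hb
      have hF0 : Real.arsinh (c * Real.sinh 0) = 0 := by simp
      have hconv := aux_convex c hc hc1
      have hs : (0:ℝ) < a / 2 := by linarith
      have hr : (0:ℝ) < b / 2 := by linarith
      have hsr : a / 2 < b / 2 := by linarith
      have hlt1 : (a/2)/(b/2) < 1 := (div_lt_one hr).2 hsr
      have hkey := hconv.2 (mem_Ici.mpr hr.le) (mem_Ici.mpr (le_refl 0)) hr.ne'
        (div_pos hs hr) (by linarith : (0:ℝ) < 1 - (a/2)/(b/2)) (by ring)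
      simp only [smul_eq_mul, mul_zero, add_zero, hF0] at hkey
      rw [div_mul_cancel₀ _ hr.ne'] at hkey
      have hkey2 : Real.arsinh (c * Real.sinh (a / 2)) * (b / 2) <
          (a / 2) * Real.arsinh (c * Real.sinh (b / 2)) := by
        have h := mul_lt_mul_of_pos_right hkey hr
        calc Real.arsinh (c * Real.sinh (a / 2)) * (b / 2) <
            ((a/2)/(b/2) * Real.arsinh (c * Real.sinh (b / 2))) * (b/2) := h
          _ = (a / 2) * Real.arsinh (c * Real.sinh (b / 2)) := by
              field_simp
      simp only
      rw [div_lt_div_iff₀ (by positivity) (by positivity)]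
      nlinarith
    · intro t ht
      have hs : (0:ℝ) ≤ t / 2 := by linarith
      constructor
      · have h1 : Real.sinh (c * (t / 2)) ≤ c * Real.sinh (t / 2) :=
          aux_sinh_mul c (t / 2) hc.le hc1.le hs
        have h2 : c * (t / 2) ≤ Real.arsinh (c * Real.sinh (t / 2)) := by
          rw [← Real.arsinh_sinh (c * (t / 2))]
          exact Real.arsinh_le_arsinh.2 h1
        linarith
      · have h1 : c * Real.sinh (t / 2) ≤ Real.sinh (t / 2) := by
          have := Real.sinh_nonneg_iff.2 hs
          nlinarith
        have h2 : Real.arsinh (c * Real.sinh (t / 2)) ≤ t / 2 := by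
          calc Real.arsinh (c * Real.sinh (t / 2)) ≤ Real.arsinh (Real.sinh (t / 2)) :=
            Real.arsinh_le_arsinh.2 h1
          _ = t / 2 := Real.arsinh_sinh _
        linarith
  · intro hc1
    constructor
    · intro a ha b hb hab
      rw [mem_Ioi] at ha hb
      have hF0 : Real.arsinh (c * Real.sinh 0) = 0 := by simp
      have hconc := aux_concave c hc1
      have hs : (0:ℝ) < a / 2 := by linarith
      have hr : (0:ℝ) < b / 2 := by linarith
      have hsr : a / 2 < b / 2 := by linarith
      have hlt1 : (a/2)/(b/2) < 1 := (div_lt_one hr).2 hsr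
      have hkey := hconc.2 (mem_Ici.mpr hr.le) (mem_Ici.mpr (le_refl 0)) hr.ne'
        (div_pos hs hr) (by linarith : (0:ℝ) < 1 - (a/2)/(b/2)) (by ring)
      simp only [smul_eq_mul, mul_zero, add_zero, hF0] at hkey
      rw [div_mul_cancel₀ _ hr.ne'] at hkey
      have hkey2 : (a / 2) * Real.arsinh (c * Real.sinh (b / 2)) <
          Real.arsinh (c * Real.sinh (a / 2)) * (b / 2) := by
        have h := mul_lt_mul_of_pos_right hkey hr
        calc (a / 2) * Real.arsinh (c * Real.sinh (b / 2))
            = ((a/2)/(b/2) * Real.arsinh (c * Real.sinh (b / 2))) * (b/2) := by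
              field_simp
          _ < Real.arsinh (c * Real.sinh (a / 2)) * (b / 2) := h
      simp only
      rw [div_lt_div_iff₀ (by positivity) (by positivity)]
      nlinarith
    · intro t ht
      have hs : (0:ℝ) ≤ t / 2 := by linarith
      constructor
      · have h1 : Real.sinh (t / 2) ≤ c * Real.sinh (t / 2) := by
          have := Real.sinh_nonneg_iff.2 hs
          nlinarith
        have h2 : t / 2 ≤ Real.arsinh (c * Real.sinh (t / 2)) := by
          calc t / 2 = Real.arsinh (Real.sinh (t / 2)) := (Real.arsinh_sinh _).symm
          _ ≤ Real.arsinh (c * Real.sinh (t / 2)) := Real.arsinh_le_arsinh.2 h1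
        linarith
      · have hcpos : (0:ℝ) < c := hc
        have h1 : Real.sinh ((1 / c) * (c * (t / 2))) ≤ (1 / c) * Real.sinh (c * (t / 2)) :=
          aux_sinh_mul (1 / c) (c * (t / 2)) (by positivity)
            (by rw [div_le_one hcpos]; linarith) (by positivity)
        rw [show (1 / c) * (c * (t / 2)) = t / 2 by field_simp] at h1
        have h1' : c * Real.sinh (t / 2) ≤ Real.sinh (c * (t / 2)) := by
          have h := mul_le_mul_of_nonneg_left h1 hcpos.le
          calc c * Real.sinh (t / 2) ≤ c * ((1 / c) * Real.sinh (c * (t / 2))) := h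
            _ = Real.sinh (c * (t / 2)) := by field_simp
        have h2 : Real.arsinh (c * Real.sinh (t / 2)) ≤ c * (t / 2) := by
          calc Real.arsinh (c * Real.sinh (t / 2)) ≤ Real.arsinh (Real.sinh (c * (t / 2))) :=
            Real.arsinh_le_arsinh.2 h1'
          _ = c * (t / 2) := Real.arsinh_sinh _
        linarith
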